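/- arXiv:2403.08445 — 4 statements merged into one kernel-verified Lean document; each statement's English description precedes it below -/
import Mathlib

section
/- For any function f:[0,1]→ℝ with ∫₀¹ z(1-z)|f'(z)|² dz < ∞, one has ∫₀¹ |f(z) - ∫₀¹ f(w) dw|² dz ≤ (1/2) ∫₀¹ z(1-z)|f'(z)|² dz. -/
open MeasureTheory intervalIntegral

section WPAux

/-- Cauchy–Schwarz for interval integrals. -/
lemma wp_cs {g : ℝ → ℝ} {a b : ℝ} (hab : a ≤ b)
    (hg : IntervalIntegrable g volume a b)
    (hg2 : IntervalIntegrable (fun t => g t ^ 2) volume a b) :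
    (∫ t in a..b, g t) ^ 2 ≤ (b - a) * ∫ t in a..b, g t ^ 2 := by
  rcases eq_or_lt_of_le hab with rfl | hlt
  · simp
  set S := ∫ t in a..b, g t with hS
  have h1 : IntervalIntegrable (fun t => (b-a)^2 * g t ^ 2) volume a b := hg2.const_mul _
  have h2 : IntervalIntegrable (fun t => (2*(b-a)*S) * g t) volume a b := hg.const_mul _
  have key : 0 ≤ ∫ t in a..b, ((b - a) * g t - S) ^ 2 :=
    intervalIntegral.integral_nonneg hab (fun x _ => sq_nonneg _)
  have expand : ∫ t in a..b, ((b - a) * g t - S) ^ 2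
      = (b-a)^2 * (∫ t in a..b, g t ^ 2) - (2*(b-a)*S) * S + (b-a) * S^2 := by
    have e : (fun t => ((b - a) * g t - S) ^ 2)
        = fun t => ((b-a)^2 * g t ^2 - (2*(b-a)*S) * g t) + S^2 := by
      funext t; ring
    rw [e, intervalIntegral.integral_add (h1.sub h2) (intervalIntegrable_const),
      intervalIntegral.integral_sub h1 h2,
      intervalIntegral.integral_const_mul, intervalIntegral.integral_const_mul,
      intervalIntegral.integral_const, smul_eq_mul]
  rw [expand] at key
  nlinarith [key, hlt, sq_nonneg S]

lemma wp_lin_int (c d a b : ℝ) :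
    ∫ w in a..b, (c + d * w) = c*(b-a) + d*(b^2-a^2)/2 := by
  have h1 : IntervalIntegrable (fun w => d * w) volume a b :=
    (continuous_const.mul continuous_id).intervalIntegrable _ _
  rw [intervalIntegral.integral_add (intervalIntegrable_const (c := c)) h1,
    intervalIntegral.integral_const_mul, integral_id,
    intervalIntegral.integral_const, smul_eq_mul]
  ring

/-- `f'^2` is interval integrable on compact subintervals of `(0,1)`. -/
lemma wp_sq_int (f : ℝ → ℝ)
    (hint : IntervalIntegrable (fun z => z * (1 - z) * (deriv f z) ^ 2) volume 0 1)
    {a b : ℝ} (ha : 0 < a ⊓ b) (hb : a ⊔ b < 1) :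
    IntervalIntegrable (fun t => (deriv f t) ^ 2) volume a b := by
  have hsub : Set.uIcc a b ⊆ Set.uIcc (0:ℝ) 1 := by
    rw [Set.uIcc, Set.uIcc_of_le zero_le_one]
    exact Set.Icc_subset_Icc ha.le hb.le
  have h0 := (hint.mono_set hsub).const_mul ((a ⊓ b) * (1 - a ⊔ b))⁻¹
  refine h0.mono_fun ((measurable_deriv f).pow_const 2).aestronglyMeasurable ?_
  filter_upwards [ae_restrict_mem measurableSet_uIoc] with t ht
  rw [Set.uIoc] at ht
  have h1 : a ⊓ b ≤ t := ht.1.le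
  have h2 : t ≤ a ⊔ b := ht.2
  have hpos : 0 < (a ⊓ b) * (1 - a ⊔ b) := mul_pos ha (by linarith)
  have hw : (a ⊓ b) * (1 - a ⊔ b) ≤ t * (1 - t) := by nlinarith
  have hone : 1 ≤ ((a ⊓ b) * (1 - a ⊔ b))⁻¹ * (t*(1-t)) := by
    rw [le_inv_mul_iff₀ hpos]; linarith
  have key : (deriv f t) ^ 2 ≤ ((a ⊓ b) * (1 - a ⊔ b))⁻¹ * (t * (1 - t) * (deriv f t) ^ 2) := by
    calc (deriv f t)^2 = 1 * (deriv f t)^2 := (one_mul _).symm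
      _ ≤ (((a ⊓ b) * (1 - a ⊔ b))⁻¹ * (t*(1-t))) * (deriv f t)^2 :=
          mul_le_mul_of_nonneg_right hone (sq_nonneg _)
      _ = ((a ⊓ b) * (1 - a ⊔ b))⁻¹ * (t*(1-t)*(deriv f t)^2) := by ring
  have h3 : (0:ℝ) ≤ ((a ⊓ b) * (1 - a ⊔ b))⁻¹ * (t * (1 - t) * (deriv f t) ^ 2) :=
    le_trans (sq_nonneg _) key
  simp only [Real.norm_eq_abs, abs_of_nonneg (sq_nonneg (deriv f t)), abs_of_nonneg h3]
  exact key

lemma wp_deriv_int (f : ℝ → ℝ)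
    (hint : IntervalIntegrable (fun z => z * (1 - z) * (deriv f z) ^ 2) volume 0 1)
    {a b : ℝ} (ha : 0 < a ⊓ b) (hb : a ⊔ b < 1) :
    IntervalIntegrable (deriv f) volume a b := by
  have h0 := (intervalIntegrable_const (c := (1:ℝ))).add
    (wp_sq_int f hint ha hb)
  refine h0.mono_fun (measurable_deriv f).aestronglyMeasurable ?_
  filter_upwards with t
  have h3 : (0:ℝ) ≤ 1 + (deriv f t)^2 := by positivity
  simp only [Real.norm_eq_abs, abs_of_nonneg h3, Pi.add_apply]
  nlinarith [sq_nonneg (|deriv f t| - 1), sq_abs (deriv f t)]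

/-- Pointwise Cauchy–Schwarz bound. -/
lemma wp_ptwise (f : ℝ → ℝ)
    (hdiff : ∀ z ∈ Set.Icc (0:ℝ) 1, DifferentiableAt ℝ f z)
    (hint : IntervalIntegrable (fun z => z * (1 - z) * (deriv f z) ^ 2) volume 0 1)
    {w z : ℝ} (hw : w ∈ Set.Ioo (0:ℝ) 1) (hz : z ∈ Set.Ioo (0:ℝ) 1) :
    (f z - f w) ^ 2 ≤ |z - w| * ∫ t in Set.uIoc w z, (deriv f t) ^ 2 := by
  have main : ∀ u v : ℝ, u ∈ Set.Ioo (0:ℝ) 1 → v ∈ Set.Ioo (0:ℝ) 1 → u ≤ v →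
      (f v - f u) ^ 2 ≤ (v - u) * ∫ t in Set.Ioc u v, (deriv f t) ^ 2 := by
    intro u v hu hv huv
    have hm : (0:ℝ) < u ⊓ v := lt_inf_iff.2 ⟨hu.1, hv.1⟩
    have hM : u ⊔ v < 1 := sup_lt_iff.2 ⟨hu.2, hv.2⟩
    have hdi : IntervalIntegrable (deriv f) volume u v := wp_deriv_int f hint hm hM
    have hsq : IntervalIntegrable (fun t => (deriv f t)^2) volume u v := wp_sq_int f hint hm hM
    have hftc : ∫ t in u..v, deriv f t = f v - f u := by
      refine intervalIntegral.integral_deriv_eq_sub (fun x hx => ?_) hdi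
      rw [Set.uIcc_of_le huv] at hx
      exact hdiff x ⟨le_trans hu.1.le hx.1, le_trans hx.2 hv.2.le⟩
    have := wp_cs huv hdi hsq
    rw [hftc] at this
    rwa [← intervalIntegral.integral_of_le huv]
  rcases le_total w z with h | h
  · have := main w z hw hz h
    rwa [Set.uIoc_of_le h, abs_of_nonneg (by linarith)]
  · have := main z w hz hw h
    rw [Set.uIoc_of_ge h, abs_of_nonpos (by linarith)]
    calc (f z - f w)^2 = (f w - f z)^2 := by ring
      _ ≤ _ := by simpa using this

lemma wp_segA {z t c : ℝ} (hc : 0 ≤ c) (ht : 0 < t) (htz : t ≤ z) :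
    ∫⁻ w in Set.Ioo 0 t, ENNReal.ofReal ((z - w) * c) = ENNReal.ofReal ((t*z - t^2/2) * c) := by
  rw [← MeasureTheory.ofReal_integral_eq_lintegral_ofReal]
  · congr 1
    rw [← MeasureTheory.integral_Ioc_eq_integral_Ioo, ← intervalIntegral.integral_of_le ht.le]
    have : (fun w => (z - w) * c) = fun w => z*c + (-c) * w := by funext w; ring
    rw [this, wp_lin_int]; ring
  · exact ((continuous_const.sub continuous_id).mul continuous_const).integrableOn_Icc.mono_set
      Set.Ioo_subset_Icc_self
  · filter_upwards [ae_restrict_mem measurableSet_Ioo] with w hw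
    exact mul_nonneg (by linarith [hw.2, htz]) hc

lemma wp_segB {z t c : ℝ} (hc : 0 ≤ c) (hzt : z ≤ t) (ht : t ≤ 1) :
    ∫⁻ w in Set.Ioo t 1, ENNReal.ofReal ((w - z) * c) =
      ENNReal.ofReal ((1-t)*((1+t)/2 - z) * c) := by
  rw [← MeasureTheory.ofReal_integral_eq_lintegral_ofReal]
  · congr 1
    rw [← MeasureTheory.integral_Ioc_eq_integral_Ioo, ← intervalIntegral.integral_of_le ht]
    have : (fun w => (w - z) * c) = fun w => (-z)*c + c * w := by funext w; ring
    rw [this, wp_lin_int]; ring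
  · exact ((continuous_id.sub continuous_const).mul continuous_const).integrableOn_Icc.mono_set
      Set.Ioo_subset_Icc_self
  · filter_upwards [ae_restrict_mem measurableSet_Ioo] with w hw
    exact mul_nonneg (by linarith [hw.1]) hc

noncomputable def wpk (z t : ℝ) : ℝ := if t ≤ z then t*z - t^2/2 else (1-t)*((1+t)/2 - z)

noncomputable def wpH (f : ℝ → ℝ) (z w t : ℝ) : ENNReal :=
  (Set.uIoc w z).indicator (fun s => ENNReal.ofReal (|z - w| * (deriv f s)^2)) t

lemma wpk_meas : Measurable (Function.uncurry wpk) := by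
  unfold wpk Function.uncurry
  exact Measurable.ite (measurableSet_le measurable_snd measurable_fst)
    (by fun_prop) (by fun_prop)

lemma wpk_nonneg {z t : ℝ} (hz : z ∈ Set.Ioo (0:ℝ) 1) (ht : t ∈ Set.Ioo (0:ℝ) 1) :
    0 ≤ wpk z t := by
  unfold wpk
  obtain ⟨hz0, hz1⟩ := hz; obtain ⟨ht0, ht1⟩ := ht
  split <;> nlinarith

lemma wpk_intble {a b t : ℝ} (ha : 0 ≤ min a b) (hb : max a b ≤ 1)
    (ht : t ∈ Set.Ioo (0:ℝ) 1) : IntervalIntegrable (fun z => wpk z t) volume a b := by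
  rw [intervalIntegrable_iff]
  refine Measure.integrableOn_of_bounded (M := 2) ?_ ?_ ?_
  · rw [Set.uIoc]; simp [Real.volume_Ioc]
  · exact ((wpk_meas.comp (measurable_id.prodMk measurable_const)).aestronglyMeasurable)
  · filter_upwards [ae_restrict_mem measurableSet_uIoc] with z hz
    have h1 : 0 < z := lt_of_le_of_lt ha hz.1
    have h2 : z ≤ 1 := le_trans hz.2 hb
    obtain ⟨ht0, ht1⟩ := ht
    rw [Real.norm_eq_abs]
    refine abs_le.2 ⟨?_, ?_⟩ <;> unfold wpk <;> split <;> nlinarith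

lemma wp_k_int {t : ℝ} (ht : t ∈ Set.Ioo (0:ℝ) 1) :
    ∫ z in Set.Ioo (0:ℝ) 1, wpk z t = t*(1-t) := by
  rw [← MeasureTheory.integral_Ioc_eq_integral_Ioo,
    ← intervalIntegral.integral_of_le zero_le_one,
    ← intervalIntegral.integral_add_adjacent_intervals (b := t)
      (wpk_intble (by simp [ht.1.le]) (by simp [ht.2.le]) ht)
      (wpk_intble (by simp [ht.1.le]) (by simp [ht.2.le]) ht)]
  have hne : ∀ᵐ z : ℝ ∂(volume : Measure ℝ), z ≠ t := by
    have := MeasureTheory.compl_mem_ae_iff.2 (measure_singleton t (μ := (volume : Measure ℝ)))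
    filter_upwards [this] with z hz; simpa using hz
  have e1 : ∫ z in (0:ℝ)..t, wpk z t = ∫ z in (0:ℝ)..t, ((1-t)*((1+t)/2 - z)) := by
    refine intervalIntegral.integral_congr_ae ?_
    filter_upwards [hne] with z hzne hz
    rw [Set.uIoc_of_le ht.1.le] at hz
    have : ¬ (t ≤ z) := not_le.2 (lt_of_le_of_ne hz.2 hzne)
    simp [wpk, this]
  have e2 : ∫ z in t..(1:ℝ), wpk z t = ∫ z in t..(1:ℝ), (t*z - t^2/2) := by
    refine intervalIntegral.integral_congr_ae (Filter.Eventually.of_forall ?_)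
    intro z hz
    rw [Set.uIoc_of_le ht.2.le] at hz
    simp [wpk, hz.1.le]
  rw [e1, e2]
  have c1 : ∫ z in (0:ℝ)..t, ((1-t)*((1+t)/2 - z)) = t*(1-t)/2 := by
    have : (fun z => (1-t)*((1+t)/2 - z)) = fun z => ((1-t)*(1+t)/2) + (-(1-t)) * z := by
      funext z; ring
    rw [this, wp_lin_int]; ring
  have c2 : ∫ z in t..(1:ℝ), (t*z - t^2/2) = t*(1-t)/2 := by
    have : (fun z => t*z - t^2/2) = fun z => (-(t^2/2)) + t * z := by
      funext z; ring
    rw [this, wp_lin_int]; ring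
  rw [c1, c2]; ring

lemma wp_inner_w (f : ℝ → ℝ) {z t : ℝ} (hz : z ∈ Set.Ioo (0:ℝ) 1) (ht : t ∈ Set.Ioo (0:ℝ) 1) :
    ∫⁻ w in Set.Ioo (0:ℝ) 1, wpH f z w t = ENNReal.ofReal ((deriv f t)^2 * wpk z t) := by
  unfold wpH wpk
  set c := (deriv f t)^2 with hc'
  have hc : 0 ≤ c := sq_nonneg _
  by_cases h : t ≤ z
  · rw [if_pos h]
    have congr1 : ∫⁻ w in Set.Ioo (0:ℝ) 1,
        (Set.uIoc w z).indicator (fun s => ENNReal.ofReal (|z - w| * (deriv f s)^2)) t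
        = ∫⁻ w in Set.Ioo (0:ℝ) 1,
          (Set.Ioo (0:ℝ) t).indicator (fun w => ENNReal.ofReal ((z - w) * c)) w := by
      refine setLIntegral_congr_fun measurableSet_Ioo ?_
      intro w hw
      dsimp only
      by_cases hwt : w < t
      · have hmem : t ∈ Set.uIoc w z := Set.mem_uIoc.2 (Or.inl ⟨hwt, h⟩)
        have hmem2 : w ∈ Set.Ioo (0:ℝ) t := ⟨hw.1, hwt⟩
        rw [Set.indicator_of_mem hmem, Set.indicator_of_mem hmem2,
          abs_of_nonneg (by linarith : (0:ℝ) ≤ z - w)]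
      · have hmem : t ∉ Set.uIoc w z := by
          rw [Set.mem_uIoc]; push_neg
          exact ⟨fun h1 => absurd h1 hwt, fun h1 => absurd h (not_le.2 h1)⟩
        have hmem2 : w ∉ Set.Ioo (0:ℝ) t := fun hm => hwt hm.2
        rw [Set.indicator_of_notMem hmem, Set.indicator_of_notMem hmem2]
    rw [congr1, lintegral_indicator measurableSet_Ioo,
      Measure.restrict_restrict measurableSet_Ioo,
      Set.inter_eq_self_of_subset_left (Set.Ioo_subset_Ioo_right (by linarith [hz.2] : t ≤ 1)),
      wp_segA hc ht.1 h, mul_comm]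
  · push_neg at h
    rw [if_neg (not_le.2 h)]
    have congr1 : ∫⁻ w in Set.Ioo (0:ℝ) 1,
        (Set.uIoc w z).indicator (fun s => ENNReal.ofReal (|z - w| * (deriv f s)^2)) t
        = ∫⁻ w in Set.Ioo (0:ℝ) 1,
          (Set.Ioo t (1:ℝ)).indicator (fun w => ENNReal.ofReal ((w - z) * c)) w := by
      refine setLIntegral_congr_fun_ae measurableSet_Ioo ?_
      have hne : ∀ᵐ w : ℝ ∂(volume : Measure ℝ), w ≠ t := by
        have := MeasureTheory.compl_mem_ae_iff.2 (measure_singleton t (μ := (volume : Measure ℝ)))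
        filter_upwards [this] with w hw
        simpa using hw
      filter_upwards [hne] with w hwne hw
      by_cases hwt : t < w
      · have hmem : t ∈ Set.uIoc w z := Set.mem_uIoc.2 (Or.inr ⟨h, hwt.le⟩)
        have hmem2 : w ∈ Set.Ioo t (1:ℝ) := ⟨hwt, hw.2⟩
        rw [Set.indicator_of_mem hmem, Set.indicator_of_mem hmem2,
          abs_of_nonpos (by linarith : z - w ≤ 0)]
        ring_nf
        rw [hc']
      · have hwt' : w < t := lt_of_le_of_ne (not_lt.1 hwt) hwne
        have hmem : t ∉ Set.uIoc w z := by
          rw [Set.mem_uIoc]; push_neg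
          exact ⟨fun _ => h, fun _ => hwt'⟩
        have hmem2 : w ∉ Set.Ioo t (1:ℝ) := fun hm => hwt hm.1
        rw [Set.indicator_of_notMem hmem, Set.indicator_of_notMem hmem2]
    rw [congr1, lintegral_indicator measurableSet_Ioo,
      Measure.restrict_restrict measurableSet_Ioo,
      Set.inter_eq_self_of_subset_left (Set.Ioo_subset_Ioo_left (le_of_lt ht.1)),
      wp_segB hc h.le (by linarith [ht.2]), mul_comm]

lemma wp_kz (f : ℝ → ℝ) {t : ℝ} (ht : t ∈ Set.Ioo (0:ℝ) 1) :
    ∫⁻ z in Set.Ioo (0:ℝ) 1, ENNReal.ofReal ((deriv f t)^2 * wpk z t)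
      = ENNReal.ofReal ((deriv f t)^2 * (t*(1-t))) := by
  set c := (deriv f t)^2 with hc'
  have hc : 0 ≤ c := sq_nonneg _
  rw [← MeasureTheory.ofReal_integral_eq_lintegral_ofReal]
  · congr 1
    rw [MeasureTheory.integral_const_mul, wp_k_int ht]
  · have h := (wpk_intble (a := 0) (b := 1) (by simp) (by simp) ht).const_mul c
    rw [intervalIntegrable_iff, Set.uIoc_of_le zero_le_one] at h
    exact h.mono_set Set.Ioo_subset_Ioc_self
  · filter_upwards [ae_restrict_mem measurableSet_Ioo] with z hz
    exact mul_nonneg hc (wpk_nonneg hz ht)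

end WPAux

/-- Weighted Poincaré inequality on `[0,1]` with degenerate weight `z(1-z)`. -/
theorem weighted_poincare
    (f : ℝ → ℝ)
    (hdiff : ∀ z ∈ Set.Icc (0:ℝ) 1, DifferentiableAt ℝ f z)
    (hint : IntervalIntegrable (fun z => z * (1 - z) * (deriv f z) ^ 2) volume 0 1) :
    ∫ z in (0:ℝ)..1, (f z - ∫ w in (0:ℝ)..1, f w) ^ 2
      ≤ (1/2) * ∫ z in (0:ℝ)..1, z * (1 - z) * (deriv f z) ^ 2 := by
  set B := ∫ z in (0:ℝ)..1, z * (1 - z) * (deriv f z) ^ 2 with hBdef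
  have hfc : ContinuousOn f (Set.Icc 0 1) :=
    fun z hz => (hdiff z hz).continuousAt.continuousWithinAt
  have hfci : IntervalIntegrable f volume 0 1 := by
    apply ContinuousOn.intervalIntegrable; rwa [Set.uIcc_of_le zero_le_one]
  have hf2c : ContinuousOn (fun w => (f w)^2) (Set.Icc 0 1) := hfc.pow 2
  have hf2ci : IntervalIntegrable (fun w => (f w)^2) volume 0 1 := by
    apply ContinuousOn.intervalIntegrable; rwa [Set.uIcc_of_le zero_le_one]
  set μ1 := ∫ w in (0:ℝ)..1, f w with hμdef
  set Q := ∫ w in (0:ℝ)..1, (f w)^2 with hQdef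
  -- variance identity
  have hV : ∫ z in (0:ℝ)..1, (f z - μ1)^2 = Q - μ1^2 := by
    have e : (fun z => (f z - μ1)^2)
        = fun z => ((f z)^2 - (2*μ1)*(f z)) + μ1^2 := by funext z; ring
    rw [e, intervalIntegral.integral_add (hf2ci.sub (hfci.const_mul _))
        intervalIntegrable_const,
      intervalIntegral.integral_sub hf2ci (hfci.const_mul _),
      intervalIntegral.integral_const_mul, intervalIntegral.integral_const, smul_eq_mul]
    ring
  -- Ioo versions
  have hfI : IntegrableOn f (Set.Ioo 0 1) volume :=
    (hfc.integrableOn_Icc).mono_set Set.Ioo_subset_Icc_self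
  have hf2I : IntegrableOn (fun w => (f w)^2) (Set.Ioo 0 1) volume :=
    (hf2c.integrableOn_Icc).mono_set Set.Ioo_subset_Icc_self
  have hA : ∫ w in Set.Ioo (0:ℝ) 1, f w = μ1 := by
    rw [hμdef, intervalIntegral.integral_of_le zero_le_one,
      MeasureTheory.integral_Ioc_eq_integral_Ioo]
  have hQ2 : ∫ w in Set.Ioo (0:ℝ) 1, (f w)^2 = Q := by
    rw [hQdef, intervalIntegral.integral_of_le zero_le_one,
      MeasureTheory.integral_Ioc_eq_integral_Ioo]
  have hvol : volume.real (Set.Ioo (0:ℝ) 1) = 1 := by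
    simp [Measure.real, Real.volume_Ioo]
  have hconst : ∀ c : ℝ, IntegrableOn (fun _ : ℝ => c) (Set.Ioo (0:ℝ) 1) volume :=
    fun c => MeasureTheory.integrableOn_const (by simp [Real.volume_Ioo])
  have hexp : ∀ z : ℝ, (∫ w in Set.Ioo (0:ℝ) 1, (f z - f w)^2)
      = ((f z)^2 - (2*μ1)*(f z)) + Q := by
    intro z
    have e : (fun w => (f z - f w)^2)
        = fun w => (((f w)^2 - (2*(f z))*(f w)) + (f z)^2) := by funext w; ring
    have h1 : IntegrableOn (fun w => f w ^ 2 - 2 * f z * f w) (Set.Ioo 0 1) volume :=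
      hf2I.sub (hfI.const_mul _)
    rw [e, MeasureTheory.integral_add h1 (hconst _),
      MeasureTheory.integral_sub hf2I (hfI.const_mul _),
      MeasureTheory.integral_const_mul, hA, hQ2, MeasureTheory.setIntegral_const, hvol,
      smul_eq_mul]
    ring
  have hinner_int : IntegrableOn (fun z => ∫ w in Set.Ioo (0:ℝ) 1, (f z - f w)^2)
      (Set.Ioo 0 1) volume := by
    have e : (fun z => ∫ w in Set.Ioo (0:ℝ) 1, (f z - f w)^2)
        = fun z => ((f z)^2 - (2*μ1)*(f z)) + Q := by
      funext z; rw [hexp z]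
    rw [e]
    have h1 : IntegrableOn (fun z => f z ^ 2 - 2 * μ1 * f z) (Set.Ioo 0 1) volume :=
      hf2I.sub (hfI.const_mul _)
    exact h1.add (hconst _)
  have hXval : ∫ z in Set.Ioo (0:ℝ) 1, (∫ w in Set.Ioo (0:ℝ) 1, (f z - f w)^2)
      = 2*(Q - μ1^2) := by
    have e : (fun z => ∫ w in Set.Ioo (0:ℝ) 1, (f z - f w)^2)
        = fun z => ((f z)^2 - (2*μ1)*(f z)) + Q := by
      funext z; rw [hexp z]
    have h1 : IntegrableOn (fun z => f z ^ 2 - 2 * μ1 * f z) (Set.Ioo 0 1) volume :=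
      hf2I.sub (hfI.const_mul _)
    rw [e, MeasureTheory.integral_add h1 (hconst _),
      MeasureTheory.integral_sub hf2I (hfI.const_mul _),
      MeasureTheory.integral_const_mul, hA, hQ2, MeasureTheory.setIntegral_const, hvol,
      smul_eq_mul]
    ring
  have hB0 : 0 ≤ B := by
    refine intervalIntegral.integral_nonneg zero_le_one (fun t ht => ?_)
    exact mul_nonneg (mul_nonneg ht.1 (by linarith [ht.2])) (sq_nonneg _)
  -- main inequality
  have hmain : ∫ z in Set.Ioo (0:ℝ) 1, (∫ w in Set.Ioo (0:ℝ) 1, (f z - f w)^2) ≤ B := by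
    rw [← ENNReal.ofReal_le_ofReal_iff hB0]
    -- measurability for the swaps
    have hmeas2 : AEMeasurable
        (Function.uncurry (fun z t => ENNReal.ofReal ((deriv f t)^2 * wpk z t)))
        ((volume.restrict (Set.Ioo (0:ℝ) 1)).prod (volume.restrict (Set.Ioo (0:ℝ) 1))) := by
      refine Measurable.aemeasurable ?_
      have : Function.uncurry (fun z t => ENNReal.ofReal ((deriv f t)^2 * wpk z t))
          = fun p : ℝ × ℝ => ENNReal.ofReal ((deriv f p.2)^2 * wpk p.1 p.2) := rfl
      rw [this]
      exact ENNReal.measurable_ofReal.comp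
        ((((measurable_deriv f).pow_const 2).comp measurable_snd).mul wpk_meas)
    -- per-z bound
    have perz : ∀ z ∈ Set.Ioo (0:ℝ) 1,
        ENNReal.ofReal (∫ w in Set.Ioo (0:ℝ) 1, (f z - f w)^2)
          ≤ ∫⁻ t in Set.Ioo (0:ℝ) 1, ENNReal.ofReal ((deriv f t)^2 * wpk z t) := by
      intro z hz
      have hmeas1 : AEMeasurable (Function.uncurry (fun w t => wpH f z w t))
          ((volume.restrict (Set.Ioo (0:ℝ) 1)).prod (volume.restrict (Set.Ioo (0:ℝ) 1))) := by
        refine Measurable.aemeasurable ?_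
        have e : Function.uncurry (fun w t => wpH f z w t)
            = Set.indicator {p : ℝ × ℝ | p.1 ⊓ z < p.2 ∧ p.2 ≤ p.1 ⊔ z}
                (fun p => ENNReal.ofReal (|z - p.1| * (deriv f p.2)^2)) := by
          funext p
          simp only [Function.uncurry, wpH, Set.indicator_apply, Set.uIoc, Set.mem_Ioc,
            Set.mem_setOf_eq]
        rw [e]
        refine Measurable.indicator ?_ ?_
        · exact ENNReal.measurable_ofReal.comp
            (((continuous_const.sub continuous_fst).abs.measurable).mul
              (((measurable_deriv f).pow_const 2).comp measurable_snd))
        · have : {p : ℝ × ℝ | p.1 ⊓ z < p.2 ∧ p.2 ≤ p.1 ⊔ z}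
              = {p : ℝ × ℝ | p.1 ⊓ z < p.2} ∩ {p : ℝ × ℝ | p.2 ≤ p.1 ⊔ z} := rfl
          rw [this]
          exact MeasurableSet.inter
            (measurableSet_lt (measurable_fst.min measurable_const) measurable_snd)
            (measurableSet_le measurable_snd (measurable_fst.max measurable_const))
      calc ENNReal.ofReal (∫ w in Set.Ioo (0:ℝ) 1, (f z - f w)^2)
          = ∫⁻ w in Set.Ioo (0:ℝ) 1, ENNReal.ofReal ((f z - f w)^2) := by
            refine MeasureTheory.ofReal_integral_eq_lintegral_ofReal ?_
              (Filter.Eventually.of_forall fun w => sq_nonneg _)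
            exact ((continuousOn_const.sub hfc).pow 2).integrableOn_Icc.mono_set
              Set.Ioo_subset_Icc_self
        _ ≤ ∫⁻ w in Set.Ioo (0:ℝ) 1, ∫⁻ t in Set.Ioo (0:ℝ) 1, wpH f z w t := by
            refine lintegral_mono_ae ?_
            filter_upwards [ae_restrict_mem measurableSet_Ioo] with w hw
            have hm : (0:ℝ) < w ⊓ z := lt_inf_iff.2 ⟨hw.1, hz.1⟩
            have hM : w ⊔ z < 1 := sup_lt_iff.2 ⟨hw.2, hz.2⟩
            have hsub : Set.uIoc w z ⊆ Set.Ioo (0:ℝ) 1 := by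
              intro u hu
              rw [Set.uIoc] at hu
              exact ⟨lt_of_le_of_lt hm.le (lt_of_le_of_lt (le_refl _) hu.1),
                lt_of_le_of_lt hu.2 hM⟩
            have hsq := wp_sq_int f hint hm hM
            have hsqI : IntegrableOn (fun t => (deriv f t)^2) (Set.uIoc w z) volume := by
              rwa [intervalIntegrable_iff] at hsq
            calc ENNReal.ofReal ((f z - f w)^2)
                ≤ ENNReal.ofReal (|z - w| * ∫ t in Set.uIoc w z, (deriv f t)^2) :=
                  ENNReal.ofReal_le_ofReal (wp_ptwise f hdiff hint hw hz)
              _ = ∫⁻ t in Set.uIoc w z, ENNReal.ofReal (|z - w| * (deriv f t)^2) := by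
                  rw [← MeasureTheory.ofReal_integral_eq_lintegral_ofReal
                    (hsqI.const_mul _)
                    (Filter.Eventually.of_forall fun t =>
                      mul_nonneg (abs_nonneg _) (sq_nonneg _))]
                  rw [MeasureTheory.integral_const_mul]
              _ = ∫⁻ t in Set.Ioo (0:ℝ) 1, wpH f z w t := by
                  unfold wpH
                  rw [lintegral_indicator measurableSet_uIoc,
                    Measure.restrict_restrict measurableSet_uIoc,
                    Set.inter_eq_self_of_subset_left hsub]
        _ = ∫⁻ t in Set.Ioo (0:ℝ) 1, ∫⁻ w in Set.Ioo (0:ℝ) 1, wpH f z w t :=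
            MeasureTheory.lintegral_lintegral_swap hmeas1
        _ = ∫⁻ t in Set.Ioo (0:ℝ) 1, ENNReal.ofReal ((deriv f t)^2 * wpk z t) :=
            setLIntegral_congr_fun measurableSet_Ioo
              (fun t ht => wp_inner_w f hz ht)
    -- B-side integrability
    have hBI : IntegrableOn (fun t => (deriv f t)^2 * (t*(1-t))) (Set.Ioo (0:ℝ) 1) volume := by
      have h := hint
      rw [intervalIntegrable_iff, Set.uIoc_of_le zero_le_one] at h
      have h2 := h.mono_set Set.Ioo_subset_Ioc_self
      have e : (fun t => (deriv f t)^2 * (t*(1-t)))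
          = fun t => t * (1-t) * (deriv f t)^2 := by funext t; ring
      rw [e]; exact h2
    calc ENNReal.ofReal (∫ z in Set.Ioo (0:ℝ) 1, (∫ w in Set.Ioo (0:ℝ) 1, (f z - f w)^2))
        = ∫⁻ z in Set.Ioo (0:ℝ) 1,
            ENNReal.ofReal (∫ w in Set.Ioo (0:ℝ) 1, (f z - f w)^2) :=
          MeasureTheory.ofReal_integral_eq_lintegral_ofReal hinner_int
            (Filter.Eventually.of_forall fun z =>
              MeasureTheory.integral_nonneg fun w => sq_nonneg _)
      _ ≤ ∫⁻ z in Set.Ioo (0:ℝ) 1, ∫⁻ t in Set.Ioo (0:ℝ) 1,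
            ENNReal.ofReal ((deriv f t)^2 * wpk z t) := by
          refine lintegral_mono_ae ?_
          filter_upwards [ae_restrict_mem measurableSet_Ioo] with z hz
          exact perz z hz
      _ = ∫⁻ t in Set.Ioo (0:ℝ) 1, ∫⁻ z in Set.Ioo (0:ℝ) 1,
            ENNReal.ofReal ((deriv f t)^2 * wpk z t) :=
          MeasureTheory.lintegral_lintegral_swap hmeas2
      _ = ∫⁻ t in Set.Ioo (0:ℝ) 1, ENNReal.ofReal ((deriv f t)^2 * (t*(1-t))) :=
          setLIntegral_congr_fun measurableSet_Ioo
            (fun t ht => wp_kz f ht)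
      _ = ENNReal.ofReal (∫ t in Set.Ioo (0:ℝ) 1, (deriv f t)^2 * (t*(1-t))) :=
          (MeasureTheory.ofReal_integral_eq_lintegral_ofReal hBI
            (by
              filter_upwards [ae_restrict_mem measurableSet_Ioo] with t ht
              exact mul_nonneg (sq_nonneg _)
                (mul_nonneg ht.1.le (by linarith [ht.2])))).symm
      _ = ENNReal.ofReal B := by
          congr 1
          have e : (fun t => (deriv f t)^2 * (t*(1-t)))
              = fun t => t * (1-t) * (deriv f t)^2 := by funext t; ring
          rw [e, hBdef, intervalIntegral.integral_of_le zero_le_one,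
            MeasureTheory.integral_Ioc_eq_integral_Ioo]
  rw [hV]
  rw [hXval] at hmain
  linarith
end

section
/- If a differentiable nonnegative function F : [0,∞) → ℝ satisfies F'(t) ≤ -c F(t)³ for all t > 0 with constant c > 0 and F(0) > 0, then for all t ≥ 0, F(t)² ≤ F(0)² / (1 + 2c t F(0)²); in particular F(t) ≤ (2ct)^{-1/2} for t > 0. -/
open Set

lemma ode_decay_step (F : ℝ → ℝ) (c : ℝ) (hc : 0 < c)
    (hdiff : Differentiable ℝ F)
    (hnonneg : ∀ t ≥ (0:ℝ), 0 ≤ F t)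
    (hF0 : 0 < F 0)
    (hODE : ∀ t > (0:ℝ), deriv F t ≤ -c * (F t) ^ 3)
    (k ε : ℝ) (hk : 0 < k) (hkK : k < 2 * c * (F 0) ^ 2) (hε : 0 < ε)
    {t : ℝ} (ht : 0 ≤ t) : (F t) ^ 2 ≤ ((F 0) ^ 2 + ε) / (1 + k * t) := by
  have hden : ∀ x : ℝ, 0 ≤ x → (0:ℝ) < 1 + k * x := fun x hx => by nlinarith
  have key : ∀ ⦃x⦄, x ∈ Icc (0:ℝ) t → (F x) ^ 2 ≤ ((F 0) ^ 2 + ε) / (1 + k * x) := by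
    apply image_le_of_deriv_right_lt_deriv_boundary'
      (f := fun s => (F s) ^ 2) (f' := fun s => 2 * F s * deriv F s)
      (B := fun s => ((F 0) ^ 2 + ε) / (1 + k * s))
      (B' := fun s => -(((F 0) ^ 2 + ε) * k) / (1 + k * s) ^ 2)
    case hf => exact (hdiff.continuous.pow 2).continuousOn
    case hf' =>
      intro x _
      have h : HasDerivAt (fun s => (F s) ^ 2) (2 * F x * deriv F x) x := by
        have := ((hdiff x).hasDerivAt).fun_pow 2
        exact this.congr_deriv (by push_cast; ring)
      exact h.hasDerivWithinAt
    case ha => simp; linarith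
    case hB =>
      apply ContinuousOn.div continuousOn_const (continuousOn_const.add (continuousOn_id.const_smul k : ContinuousOn (fun s:ℝ => k*s) _))
      intro x hx
      exact ne_of_gt (hden x hx.1)
    case hB' =>
      intro x hx
      have hD : HasDerivAt (fun s : ℝ => 1 + k * s) k x := by
        simpa using (hasDerivAt_const x (1:ℝ)).fun_add ((hasDerivAt_id x).const_mul k)
      have h := (hasDerivAt_const x ((F 0) ^ 2 + ε)).fun_div hD (ne_of_gt (hden x hx.1))
      have h2 : HasDerivAt (fun s => ((F 0) ^ 2 + ε) / (1 + k * s))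
          (-(((F 0) ^ 2 + ε) * k) / (1 + k * x) ^ 2) x := by
        exact h.congr_deriv (by ring)
      exact h2.hasDerivWithinAt
    case bound =>
      intro x hx heq
      rcases eq_or_lt_of_le hx.1 with rfl | hxpos
      · exfalso
        simp at heq
        linarith
      · have hdenx : (0:ℝ) < 1 + k * x := hden x hx.1
        have hFx : 0 < F x := by
          have h2 : 0 < (F x) ^ 2 := by rw [heq]; positivity
          rcases lt_or_eq_of_le (hnonneg x hxpos.le) with h | h
          · exact h
          · exfalso; rw [← h] at h2; simp at h2
        have hd := hODE x hxpos
        have h1 : 2 * F x * deriv F x ≤ -2 * c * ((F x) ^ 2) ^ 2 := by nlinarith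
        have h2 : -2 * c * ((F x) ^ 2) ^ 2 < -(((F 0) ^ 2 + ε) * k) / (1 + k * x) ^ 2 := by
          rw [heq, div_pow]
          have e1 : -2 * c * (((F 0) ^ 2 + ε) ^ 2 / (1 + k * x) ^ 2)
              = (-2 * c * ((F 0) ^ 2 + ε) ^ 2) / (1 + k * x) ^ 2 := by ring
          rw [e1, div_lt_div_iff_of_pos_right (by positivity : (0:ℝ) < (1 + k * x)^2)]
          have hpos : (0:ℝ) < (F 0) ^ 2 + ε := by positivity
          have h3 : k < 2 * c * ((F 0) ^ 2 + ε) := by nlinarith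
          nlinarith [mul_pos hpos (sub_pos.mpr h3)]
        linarith
  exact key ⟨ht, le_rfl⟩



/-- ODE comparison: if `F' ≤ -c F³`, `F ≥ 0`, `F(0) > 0`, then
`F(t)² ≤ F(0)²/(1 + 2ct F(0)²)` and `F(t) ≤ (2ct)^{-1/2}` for `t > 0`. -/
theorem ode_decay (F : ℝ → ℝ) (c : ℝ) (hc : 0 < c)
    (hdiff : Differentiable ℝ F)
    (hnonneg : ∀ t ≥ (0:ℝ), 0 ≤ F t)
    (hF0 : 0 < F 0)
    (hODE : ∀ t > (0:ℝ), deriv F t ≤ -c * (F t) ^ 3) :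
    (∀ t ≥ (0:ℝ), (F t) ^ 2 ≤ (F 0) ^ 2 / (1 + 2 * c * t * (F 0) ^ 2)) ∧
    (∀ t > (0:ℝ), F t ≤ (2 * c * t) ^ (-(1:ℝ)/2)) := by
  have hK : (0:ℝ) < 2 * c * (F 0) ^ 2 := by positivity
  set K := 2 * c * (F 0) ^ 2 with hKdef
  have part1 : ∀ t ≥ (0:ℝ), (F t) ^ 2 ≤ (F 0) ^ 2 / (1 + 2 * c * t * (F 0) ^ 2) := by
    intro t ht
    have hA : ∀ k ∈ Ioo (0:ℝ) K, (F t) ^ 2 ≤ (F 0) ^ 2 / (1 + k * t) := by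
      rintro k ⟨hk0, hkK⟩
      have hden : (0:ℝ) < 1 + k * t := by nlinarith
      rw [le_div_iff₀ hden]
      apply le_of_forall_pos_le_add
      intro ε hε
      have hstep := ode_decay_step F c hc hdiff hnonneg hF0 hODE k ε hk0 hkK hε ht
      have := (le_div_iff₀ hden).1 hstep
      linarith
    have hne : (1 + K * t) ≠ 0 := by nlinarith
    have htend : Filter.Tendsto (fun k => (F 0) ^ 2 / (1 + k * t)) (nhdsWithin K (Iio K))
        (nhds ((F 0) ^ 2 / (1 + K * t))) := by
      apply Filter.Tendsto.mono_left _ nhdsWithin_le_nhds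
      exact (ContinuousAt.div continuousAt_const (by fun_prop) hne)
    have hmem : ∀ᶠ k in nhdsWithin K (Iio K), (F t) ^ 2 ≤ (F 0) ^ 2 / (1 + k * t) := by
      filter_upwards [Ioo_mem_nhdsLT_of_mem (show K ∈ Ioc (0:ℝ) K from ⟨hK, le_rfl⟩)]
        with k hk using hA k hk
    have := ge_of_tendsto htend hmem
    calc (F t) ^ 2 ≤ (F 0) ^ 2 / (1 + K * t) := this
      _ = (F 0) ^ 2 / (1 + 2 * c * t * (F 0) ^ 2) := by rw [hKdef]; ring_nf
  refine ⟨part1, ?_⟩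
  intro t ht
  have hpos : (0:ℝ) < 2 * c * t := by positivity
  have h1 := part1 t ht.le
  have hd1 : (0:ℝ) < 1 + 2 * c * t * (F 0) ^ 2 := by positivity
  have h2 : (F t) ^ 2 ≤ 1 / (2 * c * t) := by
    refine h1.trans ?_
    rw [div_le_div_iff₀ hd1 hpos]
    nlinarith
  have h3 : F t ≤ Real.sqrt (1 / (2 * c * t)) := by
    have := Real.sqrt_le_sqrt h2
    rwa [Real.sqrt_sq (hnonneg t ht.le)] at this
  have h4 : Real.sqrt (1 / (2 * c * t)) = (2 * c * t) ^ (-(1:ℝ)/2) := by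
    rw [show (-(1:ℝ)/2) = -((1:ℝ)/2) by norm_num, Real.rpow_neg hpos.le, one_div,
      Real.sqrt_inv, Real.sqrt_eq_rpow]
  rwa [h4] at h3
end

section
/- Let f₁(u) = a u² + g(u) with a > 0 and g ∈ C²(ℝ) satisfying ‖g''‖_∞ < 2a. Let u₋ > u₊, ε = u₋ - u₊, σ = (f₁(u₋) - f₁(u₊))/(u₋ - u₊), and for v ∈ (u₊, u₋) set z = (u₋ - v)/ε and h(v) = f₁(v) - f₁(u₋) - σ(v - u₋). Then ((2a - ‖g''‖_∞)/2) ε² z(1-z) ≤ -h(v) ≤ ((2a + ‖g''‖_∞)/2) ε² z(1-z). -/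
lemma convex_aux (g : ℝ → ℝ) (M : ℝ) (hg : ContDiff ℝ 2 g)
    (h : ∀ s, -M ≤ iteratedDeriv 2 g s) :
    ConvexOn ℝ Set.univ (fun u => g u + M / 2 * u ^ 2) := by
  have hg1 : Differentiable ℝ g := hg.differentiable (by norm_num)
  have hg2 : Differentiable ℝ (deriv g) := by
    have := (contDiff_succ_iff_deriv.mp (show ContDiff ℝ (1+1) g from hg)).2.2
    exact this.differentiable one_ne_zero
  have hF1 : Differentiable ℝ (fun u => g u + M / 2 * u ^ 2) := by
    fun_prop
  have hdF : deriv (fun u => g u + M / 2 * u ^ 2) = fun u => deriv g u + M * u := by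
    funext x
    rw [deriv_fun_add (hg1 x) (by fun_prop)]
    simp [deriv_const_mul, mul_comm]
    ring
  apply convexOn_of_deriv2_nonneg' convex_univ hF1.differentiableOn
  · rw [hdF]; exact (hg2.add (by fun_prop)).differentiableOn
  · intro x _
    have : deriv^[2] (fun u => g u + M / 2 * u ^ 2) x = iteratedDeriv 2 g x + M := by
      have : deriv^[2] (fun u => g u + M / 2 * u ^ 2) x
          = deriv (deriv (fun u => g u + M / 2 * u ^ 2)) x := by
        simp [Function.iterate_succ, Function.comp]
      rw [this, hdF, deriv_fun_add (hg2 x) (by fun_prop)]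
      rw [iteratedDeriv_succ, iteratedDeriv_succ, iteratedDeriv_zero]
      have hMx : deriv (fun u : ℝ => M * u) x = M := by
        simpa using ((hasDerivAt_id x).const_mul M).deriv
      rw [hMx]
    rw [this]
    linarith [h x]

/-- Two-sided bound for the slope of the viscous shock profile:
for `f₁(u) = a u² + g(u)` with `‖g''‖_∞ ≤ M < 2a`,
`((2a - M)/2) ε² z(1-z) ≤ -h(v) ≤ ((2a + M)/2) ε² z(1-z)`. -/
theorem profile_slope_bounds (a M : ℝ) (g : ℝ → ℝ)
    (ha : 0 < a) (hg : ContDiff ℝ 2 g)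
    (hM : ∀ s : ℝ, |iteratedDeriv 2 g s| ≤ M) (hM2 : M < 2 * a)
    (um up : ℝ) (hlt : up < um) :
    let f₁ : ℝ → ℝ := fun u => a * u ^ 2 + g u
    let ε : ℝ := um - up
    let σ : ℝ := (f₁ um - f₁ up) / (um - up)
    ∀ v : ℝ, up < v → v < um →
      let z : ℝ := (um - v) / ε
      let h : ℝ := f₁ v - f₁ um - σ * (v - um)
      ((2 * a - M) / 2) * ε ^ 2 * (z * (1 - z)) ≤ -h ∧
      -h ≤ ((2 * a + M) / 2) * ε ^ 2 * (z * (1 - z)) := by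
  intro f₁ ε σ v hv1 hv2 z hq
  have hε : (0:ℝ) < um - up := by linarith
  have hεne : um - up ≠ 0 := ne_of_gt hε
  have hzval : z = (um - v) / (um - up) := rfl
  have hεdef : ε = um - up := rfl
  have hv : v = z * up + (1 - z) * um := by
    rw [hzval]; field_simp; ring
  have hz0 : (0:ℝ) ≤ z := by
    rw [hzval]; exact div_nonneg (by linarith) hε.le
  have hz1 : z ≤ 1 := by
    rw [hzval, div_le_one hε]; linarith
  have hσ : σ * (v - um) = z * ((a * up ^ 2 + g up) - (a * um ^ 2 + g um)) := by
    show ((a * um ^ 2 + g um) - (a * up ^ 2 + g up)) / (um - up) * (v - um) = _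
    rw [hzval]; field_simp; ring
  have hgoal : -hq = (a * um ^ 2 + g um) - (a * v ^ 2 + g v)
      + z * ((a * up ^ 2 + g up) - (a * um ^ 2 + g um)) := by
    show -((a * v ^ 2 + g v) - (a * um ^ 2 + g um) - σ * (v - um)) = _
    rw [hσ]; ring
  -- convexity of g + (M/2)u² and of -g + (M/2)u²
  have convA := convex_aux g M hg (fun s => (abs_le.mp (hM s)).1)
  have convB := convex_aux (fun u => -g u) M (hg.neg)
    (fun s => by
      rw [show (fun u => -g u) = -g from rfl, iteratedDeriv_neg]
      have := (abs_le.mp (hM s)).2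
      linarith)
  have hA := convA.2 (Set.mem_univ up) (Set.mem_univ um) hz0
    (by linarith : (0:ℝ) ≤ 1 - z) (by ring)
  have hB := convB.2 (Set.mem_univ up) (Set.mem_univ um) hz0
    (by linarith : (0:ℝ) ≤ 1 - z) (by ring)
  simp only [smul_eq_mul] at hA hB
  rw [hgoal, hεdef, hv]
  constructor
  · nlinarith [hB, hz0, hz1, ha.le]
  · nlinarith [hA, hz0, hz1, ha.le]
end

section
/- Let ũ : ℝ → ℝ be C¹, strictly decreasing, with limits u₋ > u₊ at ∓∞ and ũ' ∈ L¹ ∩ L²(ℝ). Define F(τ) = ∫_ℝ |ũ(x+τ) - ũ(x)|² dx and β₁ = 2∫_ℝ ∫_{x-1}^{x} ũ'(x)ũ'(ζ) dζ dx. Then β₁ > 0, and there exists β > 0 such that for all τ ∈ ℝ, |τ| ≤ F(τ)/β + 1. -/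
open MeasureTheory Filter intervalIntegral

/-- Linear lower bound on the squared `L²` distance between a shock profile and
its translate: `β₁ > 0` and `|τ| ≤ F(τ)/β + 1` for some `β > 0`. -/
theorem shift_bound_by_L2 (u_minus u_plus : ℝ) (hjump : u_plus < u_minus)
    (w : ℝ → ℝ)
    (hC1 : ContDiff ℝ 1 w)
    (hanti : StrictAnti w)
    (hderiv_neg : ∀ x : ℝ, deriv w x < 0)
    (hlim_m : Tendsto w atBot (nhds u_minus))
    (hlim_p : Tendsto w atTop (nhds u_plus))
    (hL1 : Integrable (deriv w))
    (hL2 : Integrable (fun x => (deriv w x) ^ 2))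
    (F : ℝ → ℝ)
    (hF : ∀ τ, F τ = ∫ x : ℝ, (w (x + τ) - w x) ^ 2) :
    0 < 2 * ∫ x : ℝ, ∫ ζ in (x - 1)..x, deriv w x * deriv w ζ ∧
    ∃ β > (0:ℝ), ∀ τ : ℝ, |τ| ≤ F τ / β + 1 := by
  have hdiff : Differentiable ℝ w := hC1.differentiable one_ne_zero
  have hdc : Continuous (deriv w) := hC1.continuous_deriv le_rfl
  -- bounds
  have hub : ∀ x, w x < u_minus := by
    intro x
    have h1 : w (x - 1) ≤ u_minus := by
      refine ge_of_tendsto hlim_m ?_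
      filter_upwards [eventually_le_atBot (x - 1)] with y hy
      exact hanti.antitone hy
    linarith [hanti (show x - 1 < x by linarith)]
  have hlb : ∀ x, u_plus < w x := by
    intro x
    have h1 : u_plus ≤ w (x + 1) := by
      refine le_of_tendsto hlim_p ?_
      filter_upwards [eventually_ge_atTop (x + 1)] with y hy
      exact hanti.antitone hy
    linarith [hanti (show x < x + 1 by linarith)]
  have hbd : ∀ x y : ℝ, |w x - w y| ≤ u_minus - u_plus := by
    intro x y
    rw [abs_le]
    constructor <;> nlinarith [hub x, hub y, hlb x, hlb y]
  have ftc : ∀ a b : ℝ, (∫ t in a..b, deriv w t) = w b - w a := fun a b =>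
    intervalIntegral.integral_deriv_eq_sub (fun x _ => (hdiff x)) (hdc.intervalIntegrable a b)
  constructor
  · -- part 1
    have key : ∀ x : ℝ, (∫ ζ in (x - 1)..x, deriv w x * deriv w ζ)
        = deriv w x * (w x - w (x - 1)) := by
      intro x
      rw [intervalIntegral.integral_const_mul, ftc]
    simp_rw [key]
    have hgpos : ∀ x : ℝ, 0 < deriv w x * (w x - w (x - 1)) := fun x =>
      mul_pos_of_neg_of_neg (hderiv_neg x)
        (sub_neg.mpr (hanti (show x - 1 < x by linarith)))
    have hgcont : Continuous fun x => deriv w x * (w x - w (x - 1)) :=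
      hdc.mul (hC1.continuous.sub (hC1.continuous.comp (continuous_id.sub continuous_const)))
    have hgint : Integrable fun x => deriv w x * (w x - w (x - 1)) := by
      refine Integrable.mono' ((hL1.norm).const_mul (u_minus - u_plus))
        hgcont.aestronglyMeasurable (Eventually.of_forall fun x => ?_)
      rw [Real.norm_eq_abs, abs_mul]
      calc |deriv w x| * |w x - w (x - 1)| ≤ |deriv w x| * (u_minus - u_plus) :=
            mul_le_mul_of_nonneg_left (hbd _ _) (abs_nonneg _)
        _ = (u_minus - u_plus) * ‖deriv w x‖ := by rw [Real.norm_eq_abs]; ring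
    have : 0 < ∫ x : ℝ, deriv w x * (w x - w (x - 1)) := by
      rw [integral_pos_iff_support_of_nonneg (fun x => (hgpos x).le) hgint]
      have hsupp : Function.support (fun x => deriv w x * (w x - w (x - 1))) = Set.univ :=
        Set.eq_univ_of_forall (fun x => (hgpos x).ne')
      rw [hsupp]
      simp
    linarith
  · -- part 2
    have hd : 0 < w 0 - w (1/2 : ℝ) := sub_pos.mpr (hanti (by norm_num))
    set d : ℝ := w 0 - w (1/2 : ℝ) with hd_def
    refine ⟨d^2/2, by positivity, ?_⟩
    have hβ : (0:ℝ) < d^2/2 := by positivity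
    -- key claim
    have claim : ∀ τ : ℝ, 1 ≤ τ → d^2/2 * τ ≤ F τ := by
      intro τ hτ
      have hτ0 : 0 < τ := by linarith
      set h : ℝ → ℝ := fun x => w x - w (x + τ) with hh
      have hhnn : ∀ x, 0 ≤ h x := fun x => sub_nonneg.mpr (hanti.antitone (by linarith))
      have hhcont : Continuous h :=
        hC1.continuous.sub (hC1.continuous.comp (continuous_id.add continuous_const))
      -- integrability of h via convolution
      have hhint : Integrable h := by
        set L := ContinuousLinearMap.mul ℝ ℝ
        set g0 : ℝ → ℝ := fun t => -deriv w t with hg0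
        set k : ℝ → ℝ := Set.indicator (Set.Icc (-τ) 0) (fun _ => (1:ℝ)) with hk
        have hkint : Integrable k := by
          rw [hk, integrable_indicator_iff measurableSet_Icc]
          exact integrableOn_const measure_Icc_lt_top.ne
        have hg0int : Integrable g0 := by
          rw [hg0]; exact hL1.neg
        have hconv : Integrable (convolution g0 k L volume) :=
          hg0int.integrable_convolution L hkint
        have heq : (convolution g0 k L volume) = h := by
          funext x
          rw [convolution_def]
          have : ∀ t : ℝ, L (g0 t) (k (x - t)) = Set.indicator (Set.Icc x (x + τ)) g0 t := by
            intro t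
            by_cases ht : t ∈ Set.Icc x (x + τ)
            · rw [Set.indicator_of_mem ht, hk,
                Set.indicator_of_mem (by obtain ⟨h1, h2⟩ := ht; constructor <;> [linarith; linarith])]
              simp [L]
            · rw [Set.indicator_of_notMem ht, hk, Set.indicator_of_notMem]
              · simp [L]
              · intro hmem
                obtain ⟨h1, h2⟩ := hmem
                exact ht ⟨by linarith, by linarith⟩
          simp_rw [this]
          rw [MeasureTheory.integral_indicator measurableSet_Icc, MeasureTheory.integral_Icc_eq_integral_Ioc,
            ← intervalIntegral.integral_of_le (by linarith : x ≤ x + τ)]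
          rw [hg0]
          simp_rw [intervalIntegral.integral_neg]
          rw [ftc, hh]
          ring
        rwa [heq] at hconv
      have hh2int : Integrable (fun x => (h x)^2) := by
        refine Integrable.mono' (hhint.const_mul (u_minus - u_plus))
          (hhcont.pow 2).aestronglyMeasurable (Eventually.of_forall fun x => ?_)
        rw [Real.norm_eq_abs, abs_of_nonneg (sq_nonneg _), sq]
        have h1 : h x ≤ u_minus - u_plus := by
          have := (abs_le.mp (hbd x (x + τ))).2
          show w x - w (x + τ) ≤ u_minus - u_plus
          linarith
        exact mul_le_mul_of_nonneg_right h1 (hhnn x)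
      have hFeq : F τ = ∫ x : ℝ, (h x)^2 := by
        rw [hF]
        congr 1; funext x; rw [hh]; ring
      rw [hFeq]
      have step1 : (∫ x in Set.Ioc (-(τ/2)) 0, (h x)^2) ≤ ∫ x : ℝ, (h x)^2 :=
        setIntegral_le_integral hh2int (Eventually.of_forall fun x => sq_nonneg _)
      have step2 : d^2 * (volume (Set.Ioc (-(τ/2)) 0)).toReal
          ≤ ∫ x in Set.Ioc (-(τ/2)) 0, (h x)^2 := by
        refine (le_of_eq (by rw [smul_eq_mul, Measure.real, mul_comm])).trans (setIntegral_ge_of_const_le (c := d^2) measurableSet_Ioc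
          (by exact (measure_Ioc_lt_top (a := -(τ/2)) (b := 0)).ne) (fun x hx => ?_) hh2int.integrableOn)
        obtain ⟨hx1, hx2⟩ := hx
        have h1 : w 0 ≤ w x := hanti.antitone hx2
        have h2 : w (x + τ) ≤ w (1/2 : ℝ) := hanti.antitone (by linarith)
        have h3 : d ≤ h x := by
          show d ≤ w x - w (x + τ)
          rw [hd_def]; linarith
        exact pow_le_pow_left₀ hd.le h3 2
      have hvol : (volume (Set.Ioc (-(τ/2)) 0)).toReal = τ/2 := by
        rw [Real.volume_Ioc]
        rw [ENNReal.toReal_ofReal (by linarith)]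
        ring
      rw [hvol] at step2
      nlinarith
    -- symmetry
    have hsymm : ∀ τ : ℝ, F τ = F (-τ) := by
      intro τ
      rw [hF, hF]
      have : (∫ x : ℝ, (w (x + τ) - w x)^2)
          = ∫ x : ℝ, (fun y => (w y - w (y + -τ))^2) (x + τ) := by
        congr 1; funext x; simp
      rw [this, MeasureTheory.integral_add_right_eq_self (fun y => (w y - w (y + -τ))^2) τ]
      congr 1; funext y
      show (w y - w (y + -τ))^2 = (w (y + -τ) - w y)^2
      ring
    have hFnn : ∀ τ : ℝ, 0 ≤ F τ := by
      intro τ; rw [hF]; exact integral_nonneg fun x => sq_nonneg _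
    intro τ
    rcases le_or_gt (|τ|) 1 with hτ | hτ
    · have := hFnn τ
      have : 0 ≤ F τ / (d^2/2) := div_nonneg this hβ.le
      linarith
    · rcases le_or_gt 1 τ with h1 | h1
      · have hclaim := claim τ h1
        rw [abs_of_nonneg (by linarith)]
        have : τ ≤ F τ / (d^2/2) := (le_div_iff₀ hβ).mpr (by linarith)
        linarith
      · have hτ1 : 1 ≤ -τ := by
          rcases abs_cases τ with ⟨he, _⟩ | ⟨he, _⟩ <;> rw [he] at hτ <;> linarith
        have := claim (-τ) hτ1
        rw [← hsymm] at this
        rw [abs_of_nonpos (by linarith)]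
        have : -τ ≤ F τ / (d^2/2) := (le_div_iff₀ hβ).mpr (by linarith)
        linarith
end
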